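/- First normalization step: let α₁,…,αₙ ∈ ℂ be linearly independent over ℚ, H₀ = Σᵢ₌₁ⁿ αᵢ·pᵢqᵢ, and let H ∈ ℂ[[q,p]] satisfy H = H₀ + R₃ + o(3) where R₃ is a homogeneous polynomial of degree 3. Then there exists a homogeneous polynomial f₃ of degree 3 such that e^{ad_{f₃}}(H) = H₀ + o(3), where e^{ad_{f₃}}(H) = Σ_{j≥0}(1/j!)·ad_{f₃}^j(H) and ad_{f₃}(F) = {F, f₃}. -/

import Mathlib

/- ℂ[[q,p]] is `MvPowerSeries (Fin n ⊕ Fin n) ℂ`, where `Sum.inl i` is the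
variable `qᵢ` and `Sum.inr i` is the variable `pᵢ`. -/

open MvPowerSeries

/-- Partial derivative of a multivariate formal power series. -/
noncomputable def pd {σ : Type} [DecidableEq σ] (x : σ) (f : MvPowerSeries σ ℂ) :
    MvPowerSeries σ ℂ :=
  fun m => ((m x : ℂ) + 1) * coeff (R := ℂ) (m + Finsupp.single x 1) f

/-- The Poisson bracket `{f,g} = Σᵢ ∂_{qᵢ}f ∂_{pᵢ}g − ∂_{pᵢ}f ∂_{qᵢ}g` on ℂ[[q,p]]. -/
noncomputable def pois {n : ℕ} (f g : MvPowerSeries (Fin n ⊕ Fin n) ℂ) :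
    MvPowerSeries (Fin n ⊕ Fin n) ℂ :=
  ∑ i : Fin n, (pd (Sum.inl i) f * pd (Sum.inr i) g - pd (Sum.inr i) f * pd (Sum.inl i) g)

/-- Total degree of a monomial. -/
def mdeg {σ : Type} (m : σ →₀ ℕ) : ℕ := m.sum fun _ k => k

/-- `f` has order ≥ `a`: every monomial of `f` has total degree ≥ `a`. -/
def OrdGe {σ : Type} (f : MvPowerSeries σ ℂ) (a : ℕ) : Prop :=
  ∀ m, mdeg m < a → coeff (R := ℂ) m f = 0

/-- Iterates of the adjoint operator `ad_f(F) = {F, f}`: `adIter f F k = ad_f^k(F)`. -/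
noncomputable def adIter {n : ℕ} (f F : MvPowerSeries (Fin n ⊕ Fin n) ℂ) :
    ℕ → MvPowerSeries (Fin n ⊕ Fin n) ℂ
  | 0 => F
  | k + 1 => pois (adIter f F k) f

/-- The exponential `e^{ad_f}(F) = Σ_{k≥0} (1/k!) ad_f^k(F)`, defined coefficientwise
(for each monomial only finitely many terms contribute when `f` has order ≥ 3,
so the finite sum `∑ᶠ` computes the genuine sum). -/
noncomputable def expAd {n : ℕ} (f F : MvPowerSeries (Fin n ⊕ Fin n) ℂ) :
    MvPowerSeries (Fin n ⊕ Fin n) ℂ :=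
  fun m => ∑ᶠ k : ℕ, ((k.factorial : ℂ))⁻¹ * coeff (R := ℂ) m (adIter f F k)

/-- `f = g + o(l)`: every monomial of `f − g` has total degree > `l`. -/
def OEq {σ : Type} (f g : MvPowerSeries σ ℂ) (l : ℕ) : Prop :=
  ∀ m, mdeg m ≤ l → coeff (R := ℂ) m (f - g) = 0

/-- `f` is homogeneous of total degree `d`. -/
def IsHomog {σ : Type} (f : MvPowerSeries σ ℂ) (d : ℕ) : Prop :=
  ∀ m, mdeg m ≠ d → coeff (R := ℂ) m f = 0

/-! ### Auxiliary lemmas -/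

section Aux

variable {σ : Type} [DecidableEq σ]
set_option linter.unusedSectionVars false

lemma coeff_pd (x : σ) (f : MvPowerSeries σ ℂ) (m : σ →₀ ℕ) :
    coeff (R := ℂ) m (pd x f) = ((m x : ℂ) + 1) * coeff (R := ℂ) (m + Finsupp.single x 1) f := rfl

lemma mdeg_add (a b : σ →₀ ℕ) : mdeg (a + b) = mdeg a + mdeg b :=
  Finsupp.sum_add_index' (fun _ => rfl) (fun _ _ _ => rfl)

lemma mdeg_single (x : σ) (k : ℕ) : mdeg (Finsupp.single x k) = k :=
  Finsupp.sum_single_index rfl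

lemma mdeg_eq_sum [Fintype σ] (m : σ →₀ ℕ) : mdeg m = ∑ x, m x :=
  Finsupp.sum_fintype _ _ (fun _ => rfl)

lemma ordge_mono {f : MvPowerSeries σ ℂ} {a b : ℕ} (h : OrdGe f a) (hba : b ≤ a) : OrdGe f b :=
  fun m hm => h m (lt_of_lt_of_le hm hba)

lemma ordge_pd {f : MvPowerSeries σ ℂ} {a : ℕ} (h : OrdGe f (a + 1)) (x : σ) :
    OrdGe (pd x f) a := by
  intro m hm
  rw [coeff_pd, h _ (by rw [mdeg_add, mdeg_single]; omega), mul_zero]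

lemma ordge_mul {f g : MvPowerSeries σ ℂ} {a b : ℕ} (hf : OrdGe f a) (hg : OrdGe g b) :
    OrdGe (f * g) (a + b) := by
  intro m hm
  rw [MvPowerSeries.coeff_mul]
  apply Finset.sum_eq_zero
  intro p hp
  rw [Finset.HasAntidiagonal.mem_antidiagonal] at hp
  have hd : mdeg p.1 + mdeg p.2 = mdeg m := by rw [← mdeg_add, hp]
  rcases lt_or_ge (mdeg p.1) a with h1 | h1
  · rw [hf _ h1, zero_mul]
  · rw [hg _ (by omega), mul_zero]

lemma pd_sub (x : σ) (f g : MvPowerSeries σ ℂ) : pd x (f - g) = pd x f - pd x g := by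
  ext m
  rw [map_sub, coeff_pd, coeff_pd, coeff_pd, map_sub, mul_sub]

end Aux

section Pois

variable {n : ℕ}

lemma ordge_pois {f g : MvPowerSeries (Fin n ⊕ Fin n) ℂ} {a b : ℕ}
    (hf : OrdGe f (a + 1)) (hg : OrdGe g (b + 1)) : OrdGe (pois f g) (a + b) := by
  intro m hm
  unfold pois
  rw [map_sum]
  apply Finset.sum_eq_zero
  intro i _
  rw [map_sub, ordge_mul (ordge_pd hf _) (ordge_pd hg _) m hm,
    ordge_mul (ordge_pd hf _) (ordge_pd hg _) m hm, sub_zero]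

lemma pois_sub_left (f g h : MvPowerSeries (Fin n ⊕ Fin n) ℂ) :
    pois (f - g) h = pois f h - pois g h := by
  unfold pois
  rw [← Finset.sum_sub_distrib]
  apply Finset.sum_congr rfl
  intro i _
  rw [pd_sub, pd_sub]
  ring

lemma ordge_adIter {f H : MvPowerSeries (Fin n ⊕ Fin n) ℂ}
    (hH : OrdGe H 2) (hf : OrdGe f 3) (k : ℕ) : OrdGe (adIter f H k) (2 + k) := by
  induction k with
  | zero => exact hH
  | succ k ih =>
    have h1 : OrdGe (adIter f H k) (k + 1 + 1) := ordge_mono ih (by omega)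
    have h2 : OrdGe (pois (adIter f H k) f) (k + 1 + 2) := ordge_pois h1 hf
    exact ordge_mono (f := adIter f H (k + 1)) h2 (by omega)

/-- The quadratic part `H₀`. -/
noncomputable def H0 (n : ℕ) (α : Fin n → ℂ) : MvPowerSeries (Fin n ⊕ Fin n) ℂ :=
  ∑ i : Fin n, C (σ := Fin n ⊕ Fin n) (R := ℂ) (α i) * X (Sum.inr i) * X (Sum.inl i)

lemma H0_eq (α : Fin n → ℂ) :
    H0 n α = ∑ i : Fin n,
      monomial (R := ℂ) (Finsupp.single (Sum.inr i) 1 + Finsupp.single (Sum.inl i) 1) (α i) := by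
  unfold H0
  apply Finset.sum_congr rfl
  intro i _
  rw [show (C (σ := Fin n ⊕ Fin n) (R := ℂ) (α i)) = monomial (R := ℂ) 0 (α i) from rfl,
    MvPowerSeries.X, MvPowerSeries.X, monomial_mul_monomial, monomial_mul_monomial,
    zero_add, mul_one, mul_one]

lemma isHomog_H0 (α : Fin n → ℂ) : IsHomog (H0 n α) 2 := by
  intro m hm
  rw [H0_eq, map_sum]
  apply Finset.sum_eq_zero
  intro j _
  classical
  rw [MvPowerSeries.coeff_monomial, if_neg]
  intro h
  apply hm
  rw [h, mdeg_add, mdeg_single, mdeg_single]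

lemma key_eq_inl (i j : Fin n) (m : (Fin n ⊕ Fin n) →₀ ℕ) :
    m + Finsupp.single (Sum.inl i) 1 =
      Finsupp.single (Sum.inr j) 1 + Finsupp.single (Sum.inl j) 1 ↔
    j = i ∧ m = Finsupp.single (Sum.inr i) 1 := by
  constructor
  · intro h
    have h1 := DFunLike.congr_fun h (Sum.inl i)
    simp only [Finsupp.add_apply, Finsupp.single_apply] at h1
    have hji : j = i := by
      by_contra hji
      simp [Sum.inl.injEq, hji] at h1
    subst hji
    exact ⟨rfl, add_right_cancel h⟩
  · rintro ⟨rfl, rfl⟩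
    rfl

lemma key_eq_inr (i j : Fin n) (m : (Fin n ⊕ Fin n) →₀ ℕ) :
    m + Finsupp.single (Sum.inr i) 1 =
      Finsupp.single (Sum.inr j) 1 + Finsupp.single (Sum.inl j) 1 ↔
    j = i ∧ m = Finsupp.single (Sum.inl i) 1 := by
  constructor
  · intro h
    have h1 := DFunLike.congr_fun h (Sum.inr i)
    simp only [Finsupp.add_apply, Finsupp.single_apply] at h1
    have hji : j = i := by
      by_contra hji
      simp [Sum.inr.injEq, hji] at h1
    subst hji
    rw [add_comm (Finsupp.single (Sum.inr j) 1)] at h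
    exact ⟨rfl, add_right_cancel h⟩
  · rintro ⟨rfl, rfl⟩
    exact add_comm _ _

lemma pd_H0_inl (α : Fin n → ℂ) (i : Fin n) :
    pd (Sum.inl i) (H0 n α) = monomial (R := ℂ) (Finsupp.single (Sum.inr i) 1) (α i) := by
  classical
  ext m
  rw [coeff_pd, H0_eq, map_sum]
  simp only [MvPowerSeries.coeff_monomial, key_eq_inl]
  by_cases hm : m = Finsupp.single (Sum.inr i) 1
  · subst hm
    simp [Finsupp.single_apply]
  · simp [hm]

lemma pd_H0_inr (α : Fin n → ℂ) (i : Fin n) :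
    pd (Sum.inr i) (H0 n α) = monomial (R := ℂ) (Finsupp.single (Sum.inl i) 1) (α i) := by
  classical
  ext m
  rw [coeff_pd, H0_eq, map_sum]
  simp only [MvPowerSeries.coeff_monomial, key_eq_inr]
  by_cases hm : m = Finsupp.single (Sum.inl i) 1
  · subst hm
    simp [Finsupp.single_apply]
  · simp [hm]

lemma coeff_monomial_mul_pd (x : Fin n ⊕ Fin n) (a : ℂ)
    (g : MvPowerSeries (Fin n ⊕ Fin n) ℂ) (m : (Fin n ⊕ Fin n) →₀ ℕ) :
    coeff (R := ℂ) m (monomial (R := ℂ) (Finsupp.single x 1) a * pd x g) =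
      a * (m x : ℂ) * coeff (R := ℂ) m g := by
  rw [MvPowerSeries.coeff_monomial_mul]
  split_ifs with h
  · have h1 : 1 ≤ m x := Finsupp.single_le_iff.mp h
    have h2 : m - Finsupp.single x 1 + Finsupp.single x 1 = m := tsub_add_cancel_of_le h
    have h3 : (m - Finsupp.single x 1 : (Fin n ⊕ Fin n) →₀ ℕ) x = m x - 1 := by
      rw [Finsupp.tsub_apply, Finsupp.single_eq_same]
    rw [coeff_pd, h2, h3]
    have hcast : ((m x - 1 : ℕ) : ℂ) + 1 = (m x : ℂ) := by
      rw [Nat.cast_sub h1]; ring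
    rw [hcast]
    ring
  · have h0 : m x = 0 := by
      by_contra h0
      exact h (Finsupp.single_le_iff.mpr (by omega))
    rw [h0]
    push_cast
    ring

lemma coeff_pois_H0 (α : Fin n → ℂ) (g : MvPowerSeries (Fin n ⊕ Fin n) ℂ)
    (m : (Fin n ⊕ Fin n) →₀ ℕ) :
    coeff (R := ℂ) m (pois (H0 n α) g) =
      (∑ i : Fin n, α i * ((m (Sum.inr i) : ℂ) - (m (Sum.inl i) : ℂ))) * coeff (R := ℂ) m g := by
  unfold pois
  rw [map_sum, Finset.sum_mul]
  apply Finset.sum_congr rfl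
  intro i _
  rw [map_sub, pd_H0_inl, pd_H0_inr, coeff_monomial_mul_pd, coeff_monomial_mul_pd]
  ring

lemma lam_ne_zero {α : Fin n → ℂ} (hα : LinearIndependent ℚ α)
    (m : (Fin n ⊕ Fin n) →₀ ℕ) (hm : mdeg m = 3) :
    (∑ i : Fin n, α i * ((m (Sum.inr i) : ℂ) - (m (Sum.inl i) : ℂ))) ≠ 0 := by
  intro h0
  have hgz : ∀ i, ((m (Sum.inr i) : ℚ) - (m (Sum.inl i) : ℚ)) = 0 := by
    apply Fintype.linearIndependent_iff.mp hα
      (fun i => (m (Sum.inr i) : ℚ) - (m (Sum.inl i) : ℚ))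
    rw [← h0]
    apply Finset.sum_congr rfl
    intro i _
    rw [Rat.smul_def]
    push_cast
    ring
  have heq : ∀ i, m (Sum.inr i) = m (Sum.inl i) := by
    intro i
    have h := hgz i
    have h' : (m (Sum.inr i) : ℚ) = (m (Sum.inl i) : ℚ) := by linarith
    exact_mod_cast h'
  have h2 : mdeg m = 2 * ∑ i : Fin n, m (Sum.inl i) := by
    rw [mdeg_eq_sum, Fintype.sum_sum_type]
    simp only [heq]
    rw [two_mul]
  omega

end Pois

/-- **First normalization step.** If `H = H₀ + R₃ + o(3)` with `H₀ = Σᵢ αᵢ pᵢqᵢ`,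
`α₁,…,αₙ` linearly independent over ℚ and `R₃` homogeneous of degree 3, then there
is a homogeneous polynomial `f₃` of degree 3 with `e^{ad_{f₃}}(H) = H₀ + o(3)`. -/
theorem first_normalization_step (n : ℕ) (α : Fin n → ℂ)
    (hα : LinearIndependent ℚ α)
    (H R₃ : MvPowerSeries (Fin n ⊕ Fin n) ℂ)
    (hR : IsHomog R₃ 3)
    (hH : OEq H ((∑ i : Fin n, C (σ := Fin n ⊕ Fin n) (R := ℂ) (α i) *
      X (Sum.inr i) * X (Sum.inl i)) + R₃) 3) :
    ∃ f₃ : MvPowerSeries (Fin n ⊕ Fin n) ℂ, IsHomog f₃ 3 ∧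
      OEq (expAd f₃ H)
        (∑ i : Fin n, C (σ := Fin n ⊕ Fin n) (R := ℂ) (α i) * X (Sum.inr i) * X (Sum.inl i)) 3 := by
  classical
  set f₃ : MvPowerSeries (Fin n ⊕ Fin n) ℂ :=
    fun m => if mdeg m = 3 then
      -(coeff (R := ℂ) m R₃) / (∑ i : Fin n, α i * ((m (Sum.inr i) : ℂ) - (m (Sum.inl i) : ℂ)))
    else 0 with hf3
  have hcf3 : ∀ m, coeff (R := ℂ) m f₃ = if mdeg m = 3 then
      -(coeff (R := ℂ) m R₃) / (∑ i : Fin n, α i * ((m (Sum.inr i) : ℂ) - (m (Sum.inl i) : ℂ)))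
    else 0 := fun m => rfl
  have hhomog : IsHomog f₃ 3 := by
    intro m hm
    rw [hcf3, if_neg hm]
  refine ⟨f₃, hhomog, ?_⟩
  show OEq (expAd f₃ H) (H0 n α) 3
  have hof : OrdGe f₃ 3 := fun m hm => hhomog m (by omega)
  have hH' : OEq H (H0 n α + R₃) 3 := hH
  have hcoeffH : ∀ m, mdeg m ≤ 3 →
      coeff (R := ℂ) m H = coeff (R := ℂ) m (H0 n α) + coeff (R := ℂ) m R₃ := by
    intro m hm
    have h := hH' m hm
    rw [map_sub, sub_eq_zero] at h
    rw [h, map_add]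
  have hOH : OrdGe H 2 := by
    intro m hm
    rw [hcoeffH m (by omega), isHomog_H0 α m (by omega), hR m (by omega), add_zero]
  have hOsub : OrdGe (H - H0 n α) 3 := by
    intro m hm
    rw [map_sub, hcoeffH m (by omega), hR m (by omega), add_zero, sub_self]
  intro m hm
  rw [map_sub]
  have hexp : coeff (R := ℂ) m (expAd f₃ H) = coeff (R := ℂ) m H + coeff (R := ℂ) m (pois H f₃) := by
    have hrfl : coeff (R := ℂ) m (expAd f₃ H) =
        ∑ᶠ k : ℕ, ((k.factorial : ℂ))⁻¹ * coeff (R := ℂ) m (adIter f₃ H k) := rfl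
    have hsupp : Function.support
        (fun k : ℕ => ((k.factorial : ℂ))⁻¹ * coeff (R := ℂ) m (adIter f₃ H k))
        ⊆ (({0, 1} : Finset ℕ) : Set ℕ) := by
      intro k hk
      simp only [Function.mem_support] at hk
      by_contra hmem
      simp only [Finset.coe_insert, Finset.coe_singleton, Set.mem_insert_iff,
        Set.mem_singleton_iff] at hmem
      push_neg at hmem
      have hk2 : 2 ≤ k := by omega
      have hz := ordge_adIter hOH hof k m (by omega)
      rw [hz, mul_zero] at hk
      exact hk rfl
    rw [hrfl, finsum_eq_sum_of_support_subset _ hsupp]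
    rw [Finset.sum_insert (by decide), Finset.sum_singleton]
    simp [adIter]
  have hpois : coeff (R := ℂ) m (pois H f₃) = coeff (R := ℂ) m (pois (H0 n α) f₃) := by
    have hsplit : pois H f₃ - pois (H0 n α) f₃ = pois (H - H0 n α) f₃ :=
      (pois_sub_left _ _ _).symm
    have h4 : OrdGe (pois (H - H0 n α) f₃) 4 := ordge_pois (a := 2) (b := 2) hOsub hof
    have h := h4 m (by omega)
    rw [← hsplit, map_sub, sub_eq_zero] at h
    exact h
  have hlamval : coeff (R := ℂ) m (pois (H0 n α) f₃) = -(coeff (R := ℂ) m R₃) := by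
    rw [coeff_pois_H0]
    by_cases h3 : mdeg m = 3
    · rw [hcf3, if_pos h3, mul_comm,
        div_mul_cancel₀ _ (lam_ne_zero hα m h3)]
    · rw [hcf3, if_neg h3, mul_zero, hR m h3, neg_zero]
  rw [hexp, hpois, hlamval, hcoeffH m hm]
  ring
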